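/- For b ∈ (0, 1/4), define N(b) = ⌈−1/2 + (1/2)√(1 + 2/b)⌉ and f(b) = 1/(12·N(b)²) + b²(N(b)² − 1)/3 + b². Then there exists a constant C > 0 such that f(b) ≤ C·b for all b ∈ (0, 1/4); that is, the sender's covert-signaling equilibrium loss −U^{CS} = f(b) is of first order O(b) in the incentive bias (in contrast with the second-order overt-persuasion loss −U^{OP} = b²). -/

import Mathlib

noncomputable section

/-- The number of cells of the Pareto-superior partition equilibrium:
`N(b) = ⌈-1/2 + (1/2)√(1 + 2/b)⌉`, viewed as a real number. -/
def Ncells (b : ℝ) : ℝ :=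
  ((⌈(-1 / 2 : ℝ) + Real.sqrt (1 + 2 / b) / 2⌉ : ℤ) : ℝ)

/-- The magnitude of the sender's best covert-signaling equilibrium payoff:
`f(b) = 1/(12 N(b)²) + b²(N(b)² - 1)/3 + b²`, so that `U^CS = -f(b)`. -/
def fCS (b : ℝ) : ℝ :=
  1 / (12 * (Ncells b) ^ 2) + b ^ 2 * ((Ncells b) ^ 2 - 1) / 3 + b ^ 2

theorem stmt_19 :
    ∃ C : ℝ, 0 < C ∧ ∀ b : ℝ, b ∈ Set.Ioo (0 : ℝ) (1 / 4) → fCS b ≤ C * b := by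
  refine ⟨2, by norm_num, ?_⟩
  intro b hb
  obtain ⟨hb0, hb4⟩ := hb
  set s := Real.sqrt (1 + 2 / b) with hs
  have hbinv : (8 : ℝ) < 2 / b := by
    rw [lt_div_iff₀ hb0]; linarith
  have hsq : s ^ 2 = 1 + 2 / b := Real.sq_sqrt (by positivity)
  have hs3 : 3 < s := by
    nlinarith [Real.sqrt_nonneg (1 + 2 / b), hsq]
  set N := Ncells b with hN
  have hNlb : -1 / 2 + s / 2 ≤ N := Int.le_ceil _
  have hNub : N < -1 / 2 + s / 2 + 1 := by
    rw [hN, Ncells, ← hs]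
    exact_mod_cast Int.ceil_lt_add_one (R := ℝ) (-1 / 2 + s / 2)
  have hNpos : (1 : ℝ) < N := by linarith
  have hNlow : s / 4 ≤ N := by linarith
  have hNhigh : N ≤ s := by linarith
  -- N^2 ≥ s^2/16 ≥ (2/b)/16 = 1/(8b)
  have hN2low : 1 / (8 * b) ≤ N ^ 2 := by
    have h1 : s ^ 2 / 16 ≤ N ^ 2 := by nlinarith
    have h2 : 1 / (8 * b) ≤ s ^ 2 / 16 := by
      rw [hsq, div_le_div_iff₀ (by positivity) (by norm_num)]
      rw [div_eq_mul_inv] at *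
      nlinarith [mul_inv_cancel₀ (ne_of_gt hb0)]
    linarith
  have h1 : 1 / (12 * N ^ 2) ≤ 2 * b / 3 := by
    rw [div_le_div_iff₀ (by positivity) (by norm_num)]
    have hb8 : b * (1 / (8 * b)) = 1 / 8 := by field_simp
    nlinarith [mul_le_mul_of_nonneg_left hN2low hb0.le]
  have hN2high : N ^ 2 ≤ 3 / b := by
    have : s ^ 2 ≤ 3 / b := by
      rw [hsq]
      have h1b : 1 ≤ 1 / b := by
        rw [le_div_iff₀ hb0]; linarith
      rw [div_eq_mul_inv, div_eq_mul_inv] at *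
      nlinarith
    nlinarith
  have h2 : b ^ 2 * (N ^ 2 - 1) / 3 ≤ b := by
    have : b ^ 2 * N ^ 2 ≤ 3 * b := by
      have := mul_le_mul_of_nonneg_left hN2high (le_of_lt (pow_pos hb0 2))
      calc b ^ 2 * N ^ 2 ≤ b ^ 2 * (3 / b) := this
        _ = 3 * b := by field_simp
      done
    nlinarith
  have h3 : b ^ 2 ≤ b / 4 := by nlinarith
  rw [fCS]
  rw [← hN]
  linarith

end
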